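/- Let μ ∈ (0,1) and c₊ = 2μ²/(3(1−μ)(3−μ)). Define h(x) = ln μ + ln((1 + μx − μ)/(μ(1−μ))) − (1/μ + x)·ln((1 + μx − μ)/(1 + μx − μ − μ²x)) + c₊x². Then h(x) ≤ 0 for all x ∈ [0, (1−μ)/(2μ)]. -/

import Mathlib

open Real Set

lemma geo_aux (s : ℝ) (hs0 : 0 < s) (hs1 : s < 1) :
    ∀ t ∈ Set.Icc (0 : ℝ) (s / 2),
      (1 + t) * Real.log (1 + t) - (s + t) * (Real.log (s + t) - Real.log s)
        + (2 * (1 - s) / (3 * s * (2 + s))) * t ^ 2 ≤ 0 := by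
  set K : ℝ := 2 * (1 - s) / (3 * s * (2 + s)) with hK
  set F : ℝ → ℝ := fun t => (1 + t) * Real.log (1 + t)
      - (s + t) * (Real.log (s + t) - Real.log s) + K * t ^ 2 with hF
  have hderiv : ∀ t ∈ Set.Icc (0 : ℝ) (s / 2),
      HasDerivAt F (Real.log (1 + t) - Real.log (s + t) + Real.log s + 2 * K * t) t := by
    intro t ht
    obtain ⟨ht0, hts⟩ := ht
    have h1t : (0:ℝ) < 1 + t := by linarith
    have hst : (0:ℝ) < s + t := by linarith
    have hid : HasDerivAt (fun t : ℝ => 1 + t) 1 t := by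
      simpa using (hasDerivAt_id t).const_add 1
    have hid2 : HasDerivAt (fun t : ℝ => s + t) 1 t := by
      simpa using (hasDerivAt_id t).const_add s
    have hlog1 : HasDerivAt (fun t : ℝ => Real.log (1 + t)) ((1 + t)⁻¹) t := by
      exact ((Real.hasDerivAt_log h1t.ne').comp t hid).congr_deriv (mul_one _)
    have hlog2 : HasDerivAt (fun t : ℝ => Real.log (s + t) - Real.log s) ((s + t)⁻¹) t := by
      simpa using ((Real.hasDerivAt_log hst.ne').comp t hid2).sub_const (Real.log s)
    have hA : HasDerivAt (fun t : ℝ => (1 + t) * Real.log (1 + t))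
        (1 * Real.log (1 + t) + (1 + t) * (1 + t)⁻¹) t := hid.mul hlog1
    have hB : HasDerivAt (fun t : ℝ => (s + t) * (Real.log (s + t) - Real.log s))
        (1 * (Real.log (s + t) - Real.log s) + (s + t) * (s + t)⁻¹) t := hid2.mul hlog2
    have hC : HasDerivAt (fun t : ℝ => K * t ^ 2) (K * (2 * t)) t := by
      simpa using ((hasDerivAt_pow 2 t).const_mul K)
    have := (hA.sub hB).add hC
    refine this.congr_deriv ?_
    rw [mul_inv_cancel₀ h1t.ne', mul_inv_cancel₀ hst.ne']
    ring
  have hanti : AntitoneOn F (Set.Icc (0 : ℝ) (s / 2)) := by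
    apply antitoneOn_of_deriv_nonpos (convex_Icc _ _)
    · exact fun t ht => (hderiv t ht).continuousAt.continuousWithinAt
    · intro t ht
      rw [interior_Icc] at ht
      exact (hderiv t ⟨ht.1.le, ht.2.le⟩).differentiableAt.differentiableWithinAt
    · intro t ht
      rw [interior_Icc] at ht
      obtain ⟨ht0, hts⟩ := ht
      have hmem : t ∈ Set.Icc (0:ℝ) (s / 2) := ⟨le_of_lt ht0, le_of_lt hts⟩
      rw [(hderiv t hmem).deriv]
      have h1t : (0:ℝ) < 1 + t := by linarith
      have hst : (0:ℝ) < s + t := by linarith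
      have hratio : (0:ℝ) < s * (1 + t) / (s + t) := by positivity
      have hlogle := Real.log_le_sub_one_of_pos hratio
      rw [Real.log_div (by positivity) hst.ne', Real.log_mul hs0.ne' h1t.ne'] at hlogle
      -- hlogle : log s + log (1+t) - log (s+t) ≤ s*(1+t)/(s+t) - 1
      have hfrac : s * (1 + t) / (s + t) - 1 = (s * t - t) / (s + t) := by
        field_simp; ring
      rw [hfrac] at hlogle
      have hineq : (s * t - t) / (s + t) + 2 * K * t ≤ 0 := by
        rw [hK, div_add' _ _ _ hst.ne']
        apply div_nonpos_of_nonpos_of_nonneg _ hst.le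
        have h2K : 2 * (2 * (1 - s) / (3 * s * (2 + s))) * t * (s + t) ≤ (1 - s) * t := by
          have hD : (0:ℝ) < 3 * s * (2 + s) := by positivity
          have heq : 2 * (2 * (1 - s) / (3 * s * (2 + s))) * t * (s + t)
              = (2 * (2 * (1 - s)) * t * (s + t)) / (3 * s * (2 + s)) := by
            field_simp
          rw [heq, div_le_iff₀ hD]
          nlinarith [mul_nonneg (mul_nonneg (sub_nonneg.2 hs1.le) ht0.le)
            (show (0:ℝ) ≤ 2 * s + 3 * s ^ 2 - 4 * t by nlinarith [hs0.le])]
        nlinarith [h2K]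
      linarith
  intro t ht
  have h0mem : (0:ℝ) ∈ Set.Icc (0:ℝ) (s / 2) := ⟨le_refl _, by linarith⟩
  have := hanti h0mem ht ht.1
  have hF0 : F 0 = 0 := by simp [hF]
  calc F t ≤ F 0 := this
    _ = 0 := hF0

/-- Key analytic estimate for the upper-tail Chernoff bound for geometric random
variables: `h(x) ≤ 0` on `[0, (1-μ)/(2μ)]` with `c₊ = 2μ²/(3(1-μ)(3-μ))`. -/
theorem geometric_upper_tail_exponent_bound (mu : ℝ) (hmu0 : 0 < mu) (hmu1 : mu < 1) :
    ∀ x ∈ Set.Icc (0 : ℝ) ((1 - mu) / (2 * mu)),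
      Real.log mu + Real.log ((1 + mu * x - mu) / (mu * (1 - mu)))
        - (1 / mu + x) * Real.log ((1 + mu * x - mu) / (1 + mu * x - mu - mu ^ 2 * x))
        + (2 * mu ^ 2 / (3 * (1 - mu) * (3 - mu))) * x ^ 2 ≤ 0 := by
  intro x hx
  obtain ⟨hx0, hxu⟩ := hx
  have hs0 : (0:ℝ) < 1 - mu := by linarith
  have ht0 : 0 ≤ mu * x := by positivity
  have htu : mu * x ≤ (1 - mu) / 2 := by
    rw [le_div_iff₀ (by positivity : (0:ℝ) < 2 * mu)] at hxu
    nlinarith [hxu]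
  have key := geo_aux (1 - mu) hs0 (by linarith) (mu * x) ⟨ht0, htu⟩
  -- positivity facts
  have hst : (0:ℝ) < 1 + mu * x - mu := by linarith
  have h1t : (0:ℝ) < 1 + mu * x := by linarith
  have hden : 1 + mu * x - mu - mu ^ 2 * x = (1 - mu) * (1 + mu * x) := by ring
  have hdpos : (0:ℝ) < 1 + mu * x - mu - mu ^ 2 * x := by rw [hden]; positivity
  -- rewrite logs
  have e1 : Real.log ((1 + mu * x - mu) / (mu * (1 - mu)))
      = Real.log (1 + mu * x - mu) - Real.log mu - Real.log (1 - mu) := by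
    rw [Real.log_div hst.ne' (by positivity), Real.log_mul hmu0.ne' hs0.ne']; ring
  have e2 : Real.log ((1 + mu * x - mu) / (1 + mu * x - mu - mu ^ 2 * x))
      = Real.log (1 + mu * x - mu) - Real.log (1 - mu) - Real.log (1 + mu * x) := by
    rw [hden, Real.log_div hst.ne' (by positivity), Real.log_mul hs0.ne' h1t.ne']; ring
  rw [e1, e2]
  have hmuL : mu * (Real.log mu + (Real.log (1 + mu * x - mu) - Real.log mu - Real.log (1 - mu))
        - (1 / mu + x) * (Real.log (1 + mu * x - mu) - Real.log (1 - mu) - Real.log (1 + mu * x))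
        + (2 * mu ^ 2 / (3 * (1 - mu) * (3 - mu))) * x ^ 2)
      = (1 + mu * x) * Real.log (1 + mu * x)
        - ((1 - mu) + mu * x) * (Real.log ((1 - mu) + mu * x) - Real.log (1 - mu))
        + (2 * (1 - (1 - mu)) / (3 * (1 - mu) * (2 + (1 - mu)))) * (mu * x) ^ 2 := by
    have h3 : (3:ℝ) - mu = 2 + (1 - mu) := by ring
    have h4 : (1:ℝ) + mu * x - mu = (1 - mu) + mu * x := by ring
    rw [h4]
    have h3m : (0:ℝ) < 3 - mu := by linarith
    field_simp [hmu0.ne', hs0.ne', h3m.ne']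
    ring
  nlinarith [key, hmuL, hmu0]
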